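/- Under the errors-in-variables model with U_1,…,U_K, ε mutually independent and (U_1,…,U_K,ε) independent of X*, assume all of X*_1,…,X*_K, U_1,…,U_K, ε are square-integrable. Let s = (s_1,…,s_K,s_y) ∈ ℝ^{K+1} be a point at which φ_{(X,Y)}(s) ≠ 0. Then for every 1 ≤ k_1 ≤ K, the mixed second-order logarithmic derivative of φ_{(X,Y)} in the directions s_{k_1} and s_y satisfies Λ_{k_1,y}[φ_{(X,Y)}](s) = Σ_{k_2=1}^K β_{k_2} · Λ_{k_1,k_2}[φ_{X*}](s_1 + β_1 s_y, …, s_K + β_K s_y). -/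

import Mathlib

open MeasureTheory ProbabilityTheory

/-- Characteristic function of a random vector `Z : Ω → (Fin d → ℝ)`. -/
noncomputable def charF {Ω : Type*} [MeasurableSpace Ω] (μ : Measure Ω) {d : ℕ}
    (Z : Ω → Fin d → ℝ) (s : Fin d → ℝ) : ℂ :=
  ∫ ω, Complex.exp (Complex.I * ((∑ k, s k * Z ω k : ℝ) : ℂ)) ∂μ

/-- Partial derivative of `φ : ℝ^d → ℂ` in the `j`-th coordinate direction. -/
noncomputable def pd {d : ℕ} (j : Fin d) (φ : (Fin d → ℝ) → ℂ) (s : Fin d → ℝ) : ℂ :=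
  fderiv ℝ φ s (Pi.single j 1)

/-- Second-order logarithmic derivative
`Λ_{j,k}[φ](s) = ∂_j∂_kφ(s)/φ(s) − (∂_jφ(s))(∂_kφ(s))/φ(s)²`. -/
noncomputable def Lam {d : ℕ} (j k : Fin d) (φ : (Fin d → ℝ) → ℂ) (s : Fin d → ℝ) : ℂ :=
  pd j (pd k φ) s / φ s - (pd j φ s) * (pd k φ s) / (φ s) ^ 2




noncomputable def Lbil (d : ℕ) : (Fin d → ℝ) →L[ℝ] (Fin d → ℝ) →L[ℝ] ℝ :=
  (-(2 * Real.pi)⁻¹ : ℝ) •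
    ∑ k : Fin d, (ContinuousLinearMap.proj (R := ℝ) (φ := fun _ : Fin d => ℝ) k).smulRight
      (ContinuousLinearMap.proj (R := ℝ) (φ := fun _ : Fin d => ℝ) k)

lemma Lbil_apply {d : ℕ} (v w : Fin d → ℝ) :
    Lbil d v w = -(2 * Real.pi)⁻¹ * ∑ k, v k * w k := by
  simp [Lbil, ContinuousLinearMap.sum_apply, Finset.mul_sum, mul_comm]

lemma charF_eq_fourier' {Ω : Type*} [MeasurableSpace Ω] (μ : Measure Ω) {d : ℕ}
    {Z : Ω → Fin d → ℝ} (hZ : Measurable Z) :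
    charF μ Z = VectorFourier.fourierIntegral Real.fourierChar (μ.map Z)
      (Lbil d).toLinearMap₁₂ (fun _ => (1 : ℂ)) := by
  funext s
  have hmeas : AEStronglyMeasurable
      (fun v : Fin d → ℝ => Complex.exp (Complex.I * ((∑ k, s k * v k : ℝ) : ℂ))) (μ.map Z) := by
    refine Continuous.aestronglyMeasurable ?_
    exact Complex.continuous_exp.comp (continuous_const.mul
      (Complex.continuous_ofReal.comp (by continuity)))
  rw [charF, VectorFourier.fourierIntegral, ← integral_map hZ.aemeasurable hmeas]
  congr 1
  funext v
  have h1 : -((Lbil d).toLinearMap₁₂ v s) = (2 * Real.pi)⁻¹ * ∑ k, s k * v k := by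
    have := Lbil_apply v s
    simp only [ContinuousLinearMap.toLinearMap₁₂_apply_apply_apply] at *
    rw [this]
    rw [Finset.sum_congr rfl (fun k _ => mul_comm (v k) (s k))]
    ring
  rw [h1, Circle.smul_def, smul_eq_mul, mul_one, Real.fourierChar_apply]
  congr 1
  push_cast
  have hpi : (Real.pi : ℂ) ≠ 0 := Complex.ofReal_ne_zero.mpr Real.pi_ne_zero
  field_simp

lemma contDiff_charF' {Ω : Type*} [MeasurableSpace Ω] {μ : Measure Ω} [IsProbabilityMeasure μ]
    {d : ℕ} {Z : Ω → Fin d → ℝ} (hZ : Measurable Z)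
    (hL2 : ∀ k, MemLp (fun ω => Z ω k) 2 μ) : ContDiff ℝ 2 (charF μ Z) := by
  rw [charF_eq_fourier' μ hZ]
  haveI : IsProbabilityMeasure (μ.map Z) := Measure.isProbabilityMeasure_map hZ.aemeasurable
  refine VectorFourier.contDiff_fourierIntegral (Lbil d) (fun n hn => ?_)
  simp only [norm_one, mul_one]
  have hint : Integrable (fun ω => ‖Z ω‖ ^ n) μ := by
    set g : Ω → ℝ := fun ω => ∑ k, ‖Z ω k‖ with hg
    have hgmem : MemLp g 2 μ := memLp_finsetSum _ (fun k _ => (hL2 k).norm)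
    have hb : ∀ ω, ‖Z ω‖ ≤ g ω := by
      intro ω
      refine (pi_norm_le_iff_of_nonneg (Finset.sum_nonneg fun k _ => norm_nonneg _)).2 ?_
      intro i
      exact Finset.single_le_sum (fun k _ => norm_nonneg (Z ω k)) (Finset.mem_univ i)
    have hgnn : ∀ ω, 0 ≤ g ω := fun ω => Finset.sum_nonneg fun k _ => norm_nonneg _
    have hmeasn : AEStronglyMeasurable (fun ω => ‖Z ω‖ ^ n) μ :=
      (hZ.norm.pow_const n).aestronglyMeasurable
    have hn' : n ≤ 2 := by exact_mod_cast hn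
    interval_cases n
    · simpa using integrable_const (1:ℝ)
    · have : Integrable g μ := (hgmem.mono_exponent (by norm_num)).integrable le_rfl
      refine this.mono' hmeasn (Filter.Eventually.of_forall fun ω => ?_)
      simp only [pow_one, norm_norm]
      exact hb ω

    · have : Integrable (fun ω => g ω ^ 2) μ := hgmem.integrable_sq
      refine this.mono' hmeasn (Filter.Eventually.of_forall fun ω => ?_)
      have h2 : ‖Z ω‖ ^ 2 ≤ g ω ^ 2 := pow_le_pow_left₀ (norm_nonneg _) (hb ω) 2
      simpa [_root_.abs_of_nonneg (pow_nonneg (norm_nonneg (Z ω)) 2)] using h2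
  rw [integrable_map_measure ((show Continuous (fun v : Fin d → ℝ => ‖v‖ ^ n) from continuous_norm.pow n).aestronglyMeasurable) hZ.aemeasurable]
  exact hint


lemma integrable_exp_I' {Ω : Type*} [MeasurableSpace Ω] {μ : Measure Ω} [IsProbabilityMeasure μ]
    {r : Ω → ℝ} (hr : Measurable r) :
    Integrable (fun ω => Complex.exp (Complex.I * (r ω : ℂ))) μ := by
  have hm : AEStronglyMeasurable (fun ω => Complex.exp (Complex.I * (r ω : ℂ))) μ :=
    (Complex.measurable_exp.comp
      (measurable_const.mul (Complex.measurable_ofReal.comp hr))).aestronglyMeasurable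
  refine (integrable_const (1:ℝ)).mono' hm (Filter.Eventually.of_forall fun ω => ?_)
  rw [Complex.norm_exp]
  simp

lemma indep_integral_mul' {Ω : Type*} [MeasurableSpace Ω] {μ : Measure Ω}
    [IsProbabilityMeasure μ] {α β : Type*} [MeasurableSpace α] [MeasurableSpace β]
    {f : Ω → α} {g : Ω → β} (hf : Measurable f) (hg : Measurable g)
    (h : IndepFun f g μ) {F : α → ℂ} {G : β → ℂ} (hF : Measurable F) (hG : Measurable G) :
    ∫ ω, F (f ω) * G (g ω) ∂μ = (∫ ω, F (f ω) ∂μ) * ∫ ω, G (g ω) ∂μ := by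
  haveI : IsProbabilityMeasure (μ.map f) := Measure.isProbabilityMeasure_map hf.aemeasurable
  haveI : IsProbabilityMeasure (μ.map g) := Measure.isProbabilityMeasure_map hg.aemeasurable
  have h' := (indepFun_iff_map_prod_eq_prod_map_map hf.aemeasurable hg.aemeasurable).mp h
  have e1 : ∫ ω, F (f ω) * G (g ω) ∂μ
      = ∫ p : α × β, F p.1 * G p.2 ∂(μ.map fun ω => (f ω, g ω)) := by
    have hFG : Measurable (fun p : α × β => F p.1 * G p.2) :=
      (hF.comp measurable_fst).mul (hG.comp measurable_snd)
    rw [integral_map (hf.prodMk hg).aemeasurable hFG.aestronglyMeasurable]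
  rw [e1, h', integral_prod_mul F G,
    integral_map hf.aemeasurable hF.aestronglyMeasurable,
    integral_map hg.aemeasurable hG.aestronglyMeasurable]




lemma contDiff_pd' {d : ℕ} (k : Fin d) {φ : (Fin d → ℝ) → ℂ} (hφ : ContDiff ℝ 2 φ) :
    ContDiff ℝ 1 (pd k φ) := by
  have h1 : ContDiff ℝ 1 (fderiv ℝ φ) := hφ.fderiv_right (by norm_num)
  exact h1.clm_apply contDiff_const

lemma pd_comp_clm' {m n : ℕ} {A : (Fin m → ℝ) → ℂ} (hA : Differentiable ℝ A)
    (T : (Fin n → ℝ) →L[ℝ] (Fin m → ℝ)) (j : Fin n) (s : Fin n → ℝ) :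
    pd j (fun x => A (T x)) s = fderiv ℝ A (T s) (T (Pi.single j 1)) := by
  rw [pd]
  have : fderiv ℝ (fun x => A (T x)) s = (fderiv ℝ A (T s)).comp T := by
    rw [show (fun x => A (T x)) = A ∘ T from rfl,
      fderiv_comp (x := s) (hA (T s)) T.differentiableAt, T.fderiv]
  rw [this]; rfl

lemma pdpd_comp' {m n : ℕ} {A : (Fin m → ℝ) → ℂ} (hA : ContDiff ℝ 2 A)
    (T : (Fin n → ℝ) →L[ℝ] (Fin m → ℝ)) (j k : Fin n) (s : Fin n → ℝ) :
    pd j (pd k (fun x => A (T x))) s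
      = fderiv ℝ (fderiv ℝ A) (T s) (T (Pi.single j 1)) (T (Pi.single k 1)) := by
  have hA1 : Differentiable ℝ A := hA.differentiable (by norm_num)
  have hD : ContDiff ℝ 1 (fderiv ℝ A) := hA.fderiv_right (by norm_num)
  have h1 : pd k (fun x => A (T x))
      = fun x => (ContinuousLinearMap.apply ℝ ℂ (T (Pi.single k 1))) (fderiv ℝ A (T x)) := by
    funext x
    rw [pd_comp_clm' hA1 T k x]; rfl
  rw [h1, pd]
  have hdT : DifferentiableAt ℝ (fun x => fderiv ℝ A (T x)) s :=
    ((hD.differentiable one_ne_zero) (T s)).comp s T.differentiableAt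
  rw [show (fun x => (ContinuousLinearMap.apply ℝ ℂ (T (Pi.single k 1))) (fderiv ℝ A (T x)))
      = (ContinuousLinearMap.apply ℝ ℂ (T (Pi.single k 1))) ∘ (fun x => fderiv ℝ A (T x)) from rfl]
  rw [fderiv_comp (x := s) (ContinuousLinearMap.apply ℝ ℂ (T (Pi.single k 1))).differentiableAt hdT,
    ContinuousLinearMap.fderiv]
  have h2 : fderiv ℝ (fun x => fderiv ℝ A (T x)) s = (fderiv ℝ (fderiv ℝ A) (T s)).comp T := by
    rw [show (fun x => fderiv ℝ A (T x)) = (fderiv ℝ A) ∘ T from rfl,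
      fderiv_comp (x := s) ((hD.differentiable one_ne_zero) (T s)) T.differentiableAt, T.fderiv]
  rw [h2]; rfl

lemma lam_comp' {m n : ℕ} {A : (Fin m → ℝ) → ℂ} (hA : ContDiff ℝ 2 A)
    (T : (Fin n → ℝ) →L[ℝ] (Fin m → ℝ)) (j k : Fin n) (s : Fin n → ℝ) :
    Lam j k (fun x => A (T x)) s
      = fderiv ℝ (fderiv ℝ A) (T s) (T (Pi.single j 1)) (T (Pi.single k 1)) / A (T s)
        - fderiv ℝ A (T s) (T (Pi.single j 1)) * fderiv ℝ A (T s) (T (Pi.single k 1))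
            / (A (T s)) ^ 2 := by
  have hA1 : Differentiable ℝ A := hA.differentiable (by norm_num)
  rw [Lam, pdpd_comp' hA T j k s, pd_comp_clm' hA1 T j s, pd_comp_clm' hA1 T k s]

lemma lam_eq_D2' {m : ℕ} {A : (Fin m → ℝ) → ℂ} (hA : ContDiff ℝ 2 A) (j k : Fin m)
    (t : Fin m → ℝ) :
    Lam j k A t
      = fderiv ℝ (fderiv ℝ A) t (Pi.single j 1) (Pi.single k 1) / A t
        - fderiv ℝ A t (Pi.single j 1) * fderiv ℝ A t (Pi.single k 1) / (A t) ^ 2 := by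
  have := lam_comp' hA (ContinuousLinearMap.id ℝ (Fin m → ℝ)) j k t
  simpa using this

lemma lam_mul' {d : ℕ} (j k : Fin d) {f g : (Fin d → ℝ) → ℂ} (hf : ContDiff ℝ 2 f)
    (hg : ContDiff ℝ 2 g) {s : Fin d → ℝ} (hfs : f s ≠ 0) (hgs : g s ≠ 0) :
    Lam j k (fun x => f x * g x) s = Lam j k f s + Lam j k g s := by
  have hf1 : Differentiable ℝ f := hf.differentiable (by norm_num)
  have hg1 : Differentiable ℝ g := hg.differentiable (by norm_num)
  have hpdf : DifferentiableAt ℝ (pd k f) s :=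
    ((contDiff_pd' k hf).differentiable one_ne_zero) s
  have hpdg : DifferentiableAt ℝ (pd k g) s :=
    ((contDiff_pd' k hg).differentiable one_ne_zero) s
  have h1 : pd k (fun x => f x * g x) = fun x => f x * pd k g x + g x * pd k f x := by
    funext x
    rw [pd, fderiv_fun_mul (hf1 x) (hg1 x)]
    simp [pd, smul_eq_mul]
  have h2 : pd j (fun x => f x * g x) s = f s * pd j g s + g s * pd j f s := by
    rw [pd, fderiv_fun_mul (hf1 s) (hg1 s)]
    simp [pd, smul_eq_mul]
  have h3 : pd j (pd k (fun x => f x * g x)) s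
      = (f s * pd j (pd k g) s + pd k g s * pd j f s)
        + (g s * pd j (pd k f) s + pd k f s * pd j g s) := by
    rw [h1, pd]
    have d1 : DifferentiableAt ℝ (fun x => f x * pd k g x) s := (hf1 s).mul hpdg
    have d2 : DifferentiableAt ℝ (fun x => g x * pd k f x) s := (hg1 s).mul hpdf
    rw [fderiv_fun_add d1 d2]
    simp only [ContinuousLinearMap.add_apply]
    rw [fderiv_fun_mul (hf1 s) hpdg, fderiv_fun_mul (hg1 s) hpdf]
    simp only [ContinuousLinearMap.add_apply, ContinuousLinearMap.smul_apply, smul_eq_mul]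
    simp only [pd]
  rw [Lam, Lam, Lam, h2, h3]
  have h4 : pd k (fun x => f x * g x) s = f s * pd k g s + g s * pd k f s := by
    rw [h1]
  rw [h4]
  field_simp
  ring

/-- the mixed second-order logarithmic derivative of `φ_{(X,Y)}` in the
directions `s_{k₁}` and `s_y` equals `∑_{k₂} β_{k₂} Λ_{k₁,k₂}[φ_{X*}]` evaluated at
`(s₁ + β₁ s_y, …, s_K + β_K s_y)`. -/
theorem stmt2 {Ω : Type*} [MeasurableSpace Ω] (μ : Measure Ω) [IsProbabilityMeasure μ]
    (K : ℕ) (Xstar : Ω → Fin K → ℝ) (U : Fin K → Ω → ℝ) (eps : Ω → ℝ) (β : Fin K → ℝ)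
    (X : Fin K → Ω → ℝ) (Y : Ω → ℝ)
    (hXm : Measurable Xstar) (hUm : ∀ k, Measurable (U k)) (hem : Measurable eps)
    (hX : ∀ k ω, X k ω = Xstar ω k + U k ω)
    (hY : ∀ ω, Y ω = ∑ k, β k * Xstar ω k + eps ω)
    (hIndep1 : iIndepFun ((Fin.snoc U eps : Fin (K+1) → Ω → ℝ)) μ)
    (hIndep2 : IndepFun (fun ω => (fun k => U k ω, eps ω)) Xstar μ)
    (hL2X : ∀ k, MemLp (fun ω => Xstar ω k) 2 μ)
    (hL2U : ∀ k, MemLp (U k) 2 μ) (hL2e : MemLp eps 2 μ)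
    (s : Fin (K+1) → ℝ)
    (hne : charF μ (fun ω => Fin.snoc (fun k => X k ω) (Y ω)) s ≠ 0)
    (k1 : Fin K) :
    Lam (Fin.castSucc k1) (Fin.last K)
        (charF μ (fun ω => Fin.snoc (fun k => X k ω) (Y ω))) s
      = ∑ k2, (β k2 : ℂ) * Lam k1 k2 (charF μ Xstar)
          (fun k => s (Fin.castSucc k) + β k * s (Fin.last K)) := by
  classical
  have hUvm : Measurable (fun ω (k : Fin K) => U k ω) :=
    measurable_pi_lambda _ (fun k => hUm k)
  have heps1m : Measurable (fun ω (_ : Fin 1) => eps ω) :=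
    measurable_pi_lambda _ (fun _ => hem)
  set A : (Fin K → ℝ) → ℂ := charF μ Xstar with hAdef
  set B : (Fin K → ℝ) → ℂ := charF μ (fun ω (k : Fin K) => U k ω) with hBdef
  set C : (Fin 1 → ℝ) → ℂ := charF μ (fun ω (_ : Fin 1) => eps ω) with hCdef
  set Tclm : (Fin (K+1) → ℝ) →L[ℝ] (Fin K → ℝ) :=
    ContinuousLinearMap.pi (fun k => ContinuousLinearMap.proj (Fin.castSucc k)
      + β k • ContinuousLinearMap.proj (Fin.last K)) with hTdef
  set P1 : (Fin (K+1) → ℝ) →L[ℝ] (Fin K → ℝ) :=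
    ContinuousLinearMap.pi (fun k : Fin K => ContinuousLinearMap.proj (Fin.castSucc k))
    with hP1def
  set P2 : (Fin (K+1) → ℝ) →L[ℝ] (Fin 1 → ℝ) :=
    ContinuousLinearMap.pi (fun _ : Fin 1 => ContinuousLinearMap.proj (Fin.last K)) with hP2def
  have hT : ∀ x : Fin (K+1) → ℝ,
      Tclm x = fun k => x (Fin.castSucc k) + β k * x (Fin.last K) := by
    intro x; funext k
    simp [hTdef, smul_eq_mul]
  have hP1 : ∀ x : Fin (K+1) → ℝ, P1 x = fun k => x (Fin.castSucc k) := by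
    intro x; funext k; simp [hP1def]
  have hP2 : ∀ x : Fin (K+1) → ℝ, P2 x = fun _ => x (Fin.last K) := by
    intro x; funext k; simp [hP2def]
  -- independence of (U_1,...,U_K) and eps
  have hsm : ∀ i, Measurable ((Fin.snoc U eps : Fin (K+1) → Ω → ℝ) i) := by
    intro i
    refine Fin.lastCases ?_ ?_ i
    · rw [Fin.snoc_last]; exact hem
    · intro k; rw [Fin.snoc_castSucc]; exact hUm k
  have hUe : IndepFun (fun ω (k : Fin K) => U k ω) eps μ := by
    have hdisj : Disjoint (Finset.univ.image (Fin.castSucc (n := K))) {Fin.last K} := by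
      simp only [Finset.disjoint_left, Finset.mem_image, Finset.mem_singleton]
      rintro a ⟨k, -, rfl⟩ h
      exact (Fin.castSucc_lt_last k).ne h
    have h0 := hIndep1.indepFun_finset (Finset.univ.image Fin.castSucc) {Fin.last K} hdisj hsm
    have h1 := h0.comp
      (φ := fun v (k : Fin K) => v (⟨Fin.castSucc k, Finset.mem_image_of_mem _ (Finset.mem_univ k)⟩ :
        (Finset.univ.image (Fin.castSucc (n := K)) : Finset (Fin (K+1)))))
      (ψ := fun v => v (⟨Fin.last K, Finset.mem_singleton_self _⟩ : ({Fin.last K} : Finset (Fin (K+1)))))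
      (measurable_pi_lambda _ (fun k => measurable_pi_apply _)) (measurable_pi_apply (X := fun _ => ℝ) (⟨Fin.last K, Finset.mem_singleton_self _⟩ : ({Fin.last K} : Finset (Fin (K+1)))))
    have e1 : ((fun v (k : Fin K) => v (⟨Fin.castSucc k, Finset.mem_image_of_mem _ (Finset.mem_univ k)⟩ :
        (Finset.univ.image (Fin.castSucc (n := K)) : Finset (Fin (K+1))))) ∘
        (fun a (i : (Finset.univ.image (Fin.castSucc (n := K)) : Finset (Fin (K+1)))) =>
          (Fin.snoc U eps : Fin (K+1) → Ω → ℝ) i a)) = fun ω (k : Fin K) => U k ω := by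
      funext ω k
      simp only [Function.comp_apply]
      rw [Fin.snoc_castSucc]
    have e2 : ((fun v => v (⟨Fin.last K, Finset.mem_singleton_self _⟩ : ({Fin.last K} : Finset (Fin (K+1))))) ∘
        (fun a (i : ({Fin.last K} : Finset (Fin (K+1)))) =>
          (Fin.snoc U eps : Fin (K+1) → Ω → ℝ) i a)) = eps := by
      funext ω
      simp only [Function.comp_apply]
      rw [Fin.snoc_last]
    rwa [e1, e2] at h1
  -- factorization of the joint characteristic function
  have hfact : charF μ (fun ω => Fin.snoc (fun k => X k ω) (Y ω))
      = fun x => A (Tclm x) * (B (P1 x) * C (P2 x)) := by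
    funext x
    have hsum : ∀ ω, (∑ j, x j * (Fin.snoc (fun k => X k ω) (Y ω) : Fin (K+1) → ℝ) j)
        = (∑ k, (x (Fin.castSucc k) + β k * x (Fin.last K)) * Xstar ω k)
          + ((∑ k, x (Fin.castSucc k) * U k ω) + x (Fin.last K) * eps ω) := by
      intro ω
      rw [Fin.sum_univ_castSucc]
      simp only [Fin.snoc_castSucc, Fin.snoc_last, hX, hY]
      rw [mul_add, Finset.mul_sum,
        show (∑ k, x (Fin.castSucc k) * (Xstar ω k + U k ω))
          = ∑ k, (x (Fin.castSucc k) * Xstar ω k + x (Fin.castSucc k) * U k ω) from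
          Finset.sum_congr rfl (fun k _ => by ring),
        show (∑ k, (x (Fin.castSucc k) + β k * x (Fin.last K)) * Xstar ω k)
          = ∑ k, (x (Fin.castSucc k) * Xstar ω k + x (Fin.last K) * (β k * Xstar ω k)) from
          Finset.sum_congr rfl (fun k _ => by ring),
        Finset.sum_add_distrib, Finset.sum_add_distrib]
      ring
    set Ffun : (Fin K → ℝ) → ℂ := fun v =>
      Complex.exp (Complex.I *
        ((∑ k, (x (Fin.castSucc k) + β k * x (Fin.last K)) * v k : ℝ) : ℂ)) with hFfun
    set Bfun : (Fin K → ℝ) → ℂ := fun u =>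
      Complex.exp (Complex.I * ((∑ k, x (Fin.castSucc k) * u k : ℝ) : ℂ)) with hBfun
    set Cfun : ℝ → ℂ := fun e => Complex.exp (Complex.I * ((x (Fin.last K) * e : ℝ) : ℂ))
      with hCfun
    have hFm : Measurable Ffun := by
      apply Complex.measurable_exp.comp
      exact measurable_const.mul (Complex.measurable_ofReal.comp (by fun_prop))
    have hBm : Measurable Bfun := by
      apply Complex.measurable_exp.comp
      exact measurable_const.mul (Complex.measurable_ofReal.comp (by fun_prop))
    have hCm : Measurable Cfun := by
      apply Complex.measurable_exp.comp
      exact measurable_const.mul (Complex.measurable_ofReal.comp (by fun_prop))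
    have hGm : Measurable (fun p : (Fin K → ℝ) × ℝ => Bfun p.1 * Cfun p.2) :=
      (hBm.comp measurable_fst).mul (hCm.comp measurable_snd)
    have hpairm : Measurable (fun ω => ((fun k => U k ω : Fin K → ℝ), eps ω)) :=
      hUvm.prodMk hem
    have step1 : charF μ (fun ω => Fin.snoc (fun k => X k ω) (Y ω)) x
        = ∫ ω, (fun p : (Fin K → ℝ) × ℝ => Bfun p.1 * Cfun p.2)
            ((fun k => U k ω, eps ω)) * Ffun (Xstar ω) ∂μ := by
      rw [charF]
      congr 1
      funext ω
      rw [hsum ω]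
      simp only [hFfun, hBfun, hCfun]
      push_cast
      rw [show Complex.I * ((∑ k, ((x (Fin.castSucc k) : ℂ)
              + (β k : ℂ) * (x (Fin.last K) : ℂ)) * (Xstar ω k : ℂ))
            + ((∑ k, (x (Fin.castSucc k) : ℂ) * (U k ω : ℂ))
              + (x (Fin.last K) : ℂ) * (eps ω : ℂ)))
          = (Complex.I * (∑ k, (x (Fin.castSucc k) : ℂ) * (U k ω : ℂ))
              + Complex.I * ((x (Fin.last K) : ℂ) * (eps ω : ℂ)))
            + Complex.I * (∑ k, ((x (Fin.castSucc k) : ℂ)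
              + (β k : ℂ) * (x (Fin.last K) : ℂ)) * (Xstar ω k : ℂ)) from by ring,
        Complex.exp_add, Complex.exp_add]
    have step2 : (∫ ω, (fun p : (Fin K → ℝ) × ℝ => Bfun p.1 * Cfun p.2)
          ((fun k => U k ω, eps ω)) * Ffun (Xstar ω) ∂μ)
        = (∫ ω, (fun p : (Fin K → ℝ) × ℝ => Bfun p.1 * Cfun p.2)
            ((fun k => U k ω, eps ω)) ∂μ) * ∫ ω, Ffun (Xstar ω) ∂μ :=
      indep_integral_mul' hpairm hXm hIndep2 hGm hFm
    have step3 : (∫ ω, (fun p : (Fin K → ℝ) × ℝ => Bfun p.1 * Cfun p.2)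
          ((fun k => U k ω, eps ω)) ∂μ)
        = (∫ ω, Bfun ((fun k => U k ω : Fin K → ℝ)) ∂μ) * ∫ ω, Cfun (eps ω) ∂μ :=
      indep_integral_mul' (f := fun ω => (fun k => U k ω : Fin K → ℝ)) (g := eps)
        hUvm hem hUe hBm hCm
    have e4 : (∫ ω, Ffun (Xstar ω) ∂μ) = A (Tclm x) := by
      rw [hAdef, charF, hT x]
    have e5 : (∫ ω, Bfun ((fun k => U k ω : Fin K → ℝ)) ∂μ) = B (P1 x) := by
      rw [hBdef, charF, hP1 x]
    have e6 : (∫ ω, Cfun (eps ω) ∂μ) = C (P2 x) := by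
      rw [hCdef, charF, hP2 x]
      simp only [Fin.sum_univ_one]
      rfl
    rw [step1, step2, step3, e4, e5, e6]
    ring
  simp only [hfact] at hne ⊢
  have hA : ContDiff ℝ 2 A := contDiff_charF' hXm hL2X
  have hB : ContDiff ℝ 2 B := contDiff_charF' hUvm (fun k => hL2U k)
  have hC : ContDiff ℝ 2 C := contDiff_charF' heps1m (fun _ => hL2e)
  have hA0 : A (Tclm s) ≠ 0 := left_ne_zero_of_mul hne
  have hBC0 : B (P1 s) * C (P2 s) ≠ 0 := right_ne_zero_of_mul hne
  have hB0 : B (P1 s) ≠ 0 := left_ne_zero_of_mul hBC0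
  have hC0 : C (P2 s) ≠ 0 := right_ne_zero_of_mul hBC0
  have hAT : ContDiff ℝ 2 (fun x => A (Tclm x)) := hA.comp Tclm.contDiff
  have hBP : ContDiff ℝ 2 (fun x => B (P1 x)) := hB.comp P1.contDiff
  have hCP : ContDiff ℝ 2 (fun x => C (P2 x)) := hC.comp P2.contDiff
  have hsplit : Lam (Fin.castSucc k1) (Fin.last K)
        (fun x => A (Tclm x) * (B (P1 x) * C (P2 x))) s
      = Lam (Fin.castSucc k1) (Fin.last K) (fun x => A (Tclm x)) s
        + (Lam (Fin.castSucc k1) (Fin.last K) (fun x => B (P1 x)) s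
          + Lam (Fin.castSucc k1) (Fin.last K) (fun x => C (P2 x)) s) := by
    rw [lam_mul' _ _ hAT (hBP.mul hCP) hA0 hBC0, lam_mul' _ _ hBP hCP hB0 hC0]
  have hP1last : P1 (Pi.single (Fin.last K) (1:ℝ)) = 0 := by
    funext k
    simp [hP1, Pi.single_eq_of_ne (Fin.castSucc_lt_last k).ne]
  have hP2cast : P2 (Pi.single (Fin.castSucc k1) (1:ℝ)) = 0 := by
    funext j
    simp [hP2, Pi.single_eq_of_ne (Fin.castSucc_lt_last k1).ne']
  have hBzero : Lam (Fin.castSucc k1) (Fin.last K) (fun x => B (P1 x)) s = 0 := by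
    rw [lam_comp' hB P1 _ _ s, hP1last]
    simp
  have hCzero : Lam (Fin.castSucc k1) (Fin.last K) (fun x => C (P2 x)) s = 0 := by
    rw [lam_comp' hC P2 _ _ s, hP2cast]
    simp
  have hTej : Tclm (Pi.single (Fin.castSucc k1) (1:ℝ)) = Pi.single k1 1 := by
    funext k
    simp [hT, Pi.single_apply, Fin.castSucc_inj, (Fin.castSucc_lt_last k1).ne']
  have hTek : Tclm (Pi.single (Fin.last K) (1:ℝ)) = fun k => β k := by
    funext k
    simp [hT, Pi.single_apply, (Fin.castSucc_lt_last k).ne]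
  have hbeta : (fun k => β k) = ∑ k2, β k2 • (Pi.single k2 1 : Fin K → ℝ) := by
    funext j
    simp [Finset.sum_apply, Pi.single_apply]
  have hmain : Lam (Fin.castSucc k1) (Fin.last K) (fun x => A (Tclm x)) s
      = ∑ k2, (β k2 : ℂ) * Lam k1 k2 A (Tclm s) := by
    rw [lam_comp' hA Tclm _ _ s, hTej, hTek, hbeta, map_sum, map_sum]
    simp only [_root_.map_smul, Complex.real_smul]
    rw [Finset.sum_div, Finset.mul_sum, Finset.sum_div, ← Finset.sum_sub_distrib]
    refine Finset.sum_congr rfl fun k2 _ => ?_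
    rw [lam_eq_D2' hA k1 k2 (Tclm s)]
    ring
  rw [show (fun k => s (Fin.castSucc k) + β k * s (Fin.last K)) = Tclm s from (hT s).symm,
    hsplit, hmain, hBzero, hCzero]
  ring
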